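/- Fix m > 0, η > 0, and 0 < E_F < W. Define ε_X(k) = (k₁²/√η + k₂²·√η)/(2m) and ε_Y(k) = (k₁²·√η + k₂²/√η)/(2m) on ℝ². Then ∫_{{k ∈ ℝ² : 2E_F ≤ ε_X(k) + ε_Y(k) ≤ 2W}} (1/(ε_X(k) + ε_Y(k))) dk/(2π)² = (m/(4π)) · (2/(√η + 1/√η)) · log(W/E_F). -/

import Mathlib

open MeasureTheory

/-- Valley-`X` dispersion `ε_X(k) = (k₁²/√η + k₂²√η)/(2m)`. -/
noncomputable def epsX (m η : ℝ) (k : ℝ × ℝ) : ℝ :=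
  (k.1 ^ 2 / Real.sqrt η + k.2 ^ 2 * Real.sqrt η) / (2 * m)

/-- Valley-`Y` dispersion `ε_Y(k) = (k₁²√η + k₂²/√η)/(2m)`. -/
noncomputable def epsY (m η : ℝ) (k : ℝ × ℝ) : ℝ :=
  (k.1 ^ 2 * Real.sqrt η + k.2 ^ 2 / Real.sqrt η) / (2 * m)

/-- Inter-valley particle–particle susceptibility (hard UV cutoff):
`∫_{2E_F ≤ ε_X + ε_Y ≤ 2W} dk/(2π)² · 1/(ε_X + ε_Y)
  = (m/(4π))·(2/(√η + 1/√η))·log(W/E_F)`. -/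
theorem intervalley_pp_susceptibility (m η EF W : ℝ)
    (hm : 0 < m) (hη : 0 < η) (hEF : 0 < EF) (hW : EF < W) :
    ∫ k in {k : ℝ × ℝ | 2 * EF ≤ epsX m η k + epsY m η k ∧ epsX m η k + epsY m η k ≤ 2 * W},
        (1 / (epsX m η k + epsY m η k)) / (2 * Real.pi) ^ 2
      = (m / (4 * Real.pi)) * (2 / (Real.sqrt η + 1 / Real.sqrt η)) * Real.log (W / EF) := by
  have hπ : (0:ℝ) < Real.pi := Real.pi_pos
  set s := Real.sqrt η with hs
  have hs0 : 0 < s := Real.sqrt_pos.mpr hη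
  set c : ℝ := (s + 1/s) / (2*m) with hc
  have hc0 : 0 < c := by positivity
  have hsum : ∀ k : ℝ × ℝ, epsX m η k + epsY m η k = c * (k.1^2 + k.2^2) := by
    intro k
    simp only [epsX, epsY, hc, ← hs]
    field_simp
    ring
  set r1 : ℝ := Real.sqrt (2*EF/c) with hr1
  set r2 : ℝ := Real.sqrt (2*W/c) with hr2
  have hr10 : 0 < r1 := Real.sqrt_pos.mpr (div_pos (by linarith) hc0)
  have hr20 : 0 < r2 := Real.sqrt_pos.mpr (div_pos (by linarith) hc0)
  have hr12 : r1 ≤ r2 := Real.sqrt_le_sqrt ((div_le_div_iff_of_pos_right hc0).mpr (by linarith))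
  -- the radial profile
  set g : ℝ × ℝ → ℝ := fun k => (1 / (c * (k.1^2 + k.2^2))) / (2*Real.pi)^2 with hg
  set F : ℝ → ℝ := fun r =>
    (Set.Icc r1 r2).indicator (fun r => r * ((1 / (c * r^2)) / (2*Real.pi)^2)) r with hF
  have hmeas : Measurable fun k : ℝ × ℝ => c * (k.1^2 + k.2^2) := by fun_prop
  have hS : MeasurableSet {k : ℝ × ℝ | 2*EF ≤ c*(k.1^2+k.2^2) ∧ c*(k.1^2+k.2^2) ≤ 2*W} :=
    (measurableSet_le measurable_const hmeas).inter (measurableSet_le hmeas measurable_const)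
  simp only [hsum]
  rw [show (fun k : ℝ × ℝ => (1 / (c * (k.1^2+k.2^2))) / (2*Real.pi)^2) = g from rfl,
    ← integral_indicator hS, ← integral_comp_polarCoord_symm]
  have hcongr : ∀ p ∈ polarCoord.target,
      p.1 • (Set.indicator {k : ℝ × ℝ | 2*EF ≤ c*(k.1^2+k.2^2) ∧ c*(k.1^2+k.2^2) ≤ 2*W} g)
        (polarCoord.symm p) = F p.1 * (fun _ : ℝ => (1:ℝ)) p.2 := by
    rintro ⟨r, θ⟩ hp
    have hr : 0 < r := hp.1
    have hsymm : polarCoord.symm (r, θ) = (r * Real.cos θ, r * Real.sin θ) := rfl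
    have hsq : (polarCoord.symm (r, θ)).1 ^ 2 + (polarCoord.symm (r, θ)).2 ^ 2 = r^2 := by
      rw [hsymm]
      have h := Real.sin_sq_add_cos_sq θ
      dsimp only
      nlinarith [Real.sin_sq_add_cos_sq θ]
    have hmem : polarCoord.symm (r, θ) ∈
        {k : ℝ × ℝ | 2*EF ≤ c*(k.1^2+k.2^2) ∧ c*(k.1^2+k.2^2) ≤ 2*W} ↔ r ∈ Set.Icc r1 r2 := by
      simp only [Set.mem_setOf_eq, hsq, Set.mem_Icc]
      constructor
      · rintro ⟨h1, h2⟩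
        constructor
        · rw [hr1, show r = Real.sqrt (r^2) from (Real.sqrt_sq hr.le).symm]
          exact Real.sqrt_le_sqrt (by rw [div_le_iff₀ hc0]; linarith)
        · rw [hr2, show r = Real.sqrt (r^2) from (Real.sqrt_sq hr.le).symm]
          exact Real.sqrt_le_sqrt (by rw [le_div_iff₀ hc0]; linarith)
      · rintro ⟨h1, h2⟩
        have h1' : 2*EF/c ≤ r^2 := by
          rw [hr1] at h1
          have := Real.sqrt_le_sqrt_iff (x := 2*EF/c) (y := r^2) (by positivity)
          rw [Real.sqrt_sq hr.le] at this
          exact this.mp h1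
        have h2' : r^2 ≤ 2*W/c := by
          rw [hr2] at h2
          have := Real.sqrt_le_sqrt_iff (x := r^2) (y := 2*W/c) (div_nonneg (by linarith) hc0.le)
          rw [Real.sqrt_sq hr.le] at this
          exact this.mp h2
        constructor
        · rw [div_le_iff₀ hc0] at h1'; linarith
        · rw [le_div_iff₀ hc0] at h2'; linarith
    by_cases hmem' : r ∈ Set.Icc r1 r2
    · rw [Set.indicator_of_mem (hmem.mpr hmem'), hF]
      simp only [Set.indicator_of_mem hmem', hg, hsq, smul_eq_mul]
      ring
    · rw [Set.indicator_of_notMem (fun h => hmem' (hmem.mp h)), hF]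
      simp [Set.indicator_of_notMem hmem']
  rw [setIntegral_congr_fun polarCoord.open_target.measurableSet hcongr]
  rw [show polarCoord.target = Set.Ioi (0:ℝ) ×ˢ Set.Ioo (-Real.pi) Real.pi from rfl,
    Measure.volume_eq_prod,
    setIntegral_prod_mul F (fun _ : ℝ => (1:ℝ)) (Set.Ioi 0) (Set.Ioo (-Real.pi) Real.pi)]
  have hθ : ∫ _ in Set.Ioo (-Real.pi) Real.pi, (1:ℝ) = 2 * Real.pi := by
    simp [Real.volume_Ioo]
    rw [max_eq_left (by linarith)]
    ring
  have hradial : ∫ r in Set.Ioi (0:ℝ), F r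
      = (1 / (c * (2*Real.pi)^2)) * (Real.log (W/EF) / 2) := by
    have hinter : Set.Ioi (0:ℝ) ∩ Set.Icc r1 r2 = Set.Icc r1 r2 :=
      Set.inter_eq_self_of_subset_right (fun x hx => lt_of_lt_of_le hr10 hx.1)
    rw [hF, setIntegral_indicator measurableSet_Icc, hinter]
    have : ∀ x ∈ Set.Icc r1 r2,
        x * ((1 / (c * x^2)) / (2*Real.pi)^2) = (1 / (c * (2*Real.pi)^2)) * (1/x) := by
      intro x hx
      have hx0 : 0 < x := lt_of_lt_of_le hr10 hx.1
      field_simp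
    rw [setIntegral_congr_fun measurableSet_Icc this, integral_const_mul,
      integral_Icc_eq_integral_Ioc, ← intervalIntegral.integral_of_le hr12,
      integral_one_div (by
        intro h
        rw [Set.uIcc_of_le hr12] at h
        exact absurd h.1 (not_le.mpr hr10))]
    congr 1
    rw [hr2, hr1, ← Real.sqrt_div (div_nonneg (by linarith) hc0.le),
      show 2*W/c / (2*EF/c) = W/EF by field_simp, Real.log_sqrt (le_of_lt (div_pos (by linarith) hEF))]
  rw [hθ, hradial, hc]
  have hss : s + 1/s ≠ 0 := by positivity
  field_simp
  ring
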